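/- arXiv:1810.04004 — 2 statements merged into one kernel-verified Lean document; each statement's English description precedes it below -/
import Mathlib

section
/- For integers 3 ≤ n ≤ m with m ≥ binom(n,2), the strong geodetic number of the complete bipartite graph K_{n,m} equals m + n - binom(n,2). -/
open SimpleGraph

/-- A set `S` of vertices is a strong geodetic set of `G` if one can fix, for each
pair of vertices of `S`, a single geodesic (shortest path) between them, so that
every vertex of the graph lies on one of the chosen geodesics. -/
def IsStrongGeodeticSet {V : Type*} (G : SimpleGraph V) (S : Set V) : Prop :=
  ∃ γ : ∀ u ∈ S, ∀ v ∈ S, G.Walk u v,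
    (∀ u (hu : u ∈ S) v (hv : v ∈ S), (γ u hu v hv).length = G.dist u v) ∧
    (∀ u (hu : u ∈ S) v (hv : v ∈ S), γ u hu v hv = (γ v hv u hu).reverse) ∧
    (∀ x : V, ∃ u, ∃ hu : u ∈ S, ∃ v, ∃ hv : v ∈ S, x ∈ (γ u hu v hv).support)

/-- The strong geodetic number of a finite graph: the minimum cardinality of a
strong geodetic set. -/
noncomputable def strongGeodeticNumber {V : Type*} [Fintype V] (G : SimpleGraph V) : ℕ :=
  sInf {k | ∃ S : Finset V, S.card = k ∧ IsStrongGeodeticSet G ↑S}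


variable {W : Type*} {G : SimpleGraph W}

lemma walk_len0 {u v : W} (w : G.Walk u v) (h : w.length = 0) :
    ∃ (he : u = v), w = he ▸ Walk.nil := by
  cases w with
  | nil => exact ⟨rfl, rfl⟩
  | cons h' p => simp at h

lemma walk_len1 {u v : W} (w : G.Walk u v) (h : w.length = 1) :
    ∃ (ha : G.Adj u v), w = Walk.cons ha Walk.nil := by
  cases w with
  | nil => simp at h
  | cons h' p =>
    simp [Walk.length_cons] at h
    obtain ⟨he, hp⟩ := walk_len0 p (Walk.nil_iff_length_eq.mp h)
    subst he
    exact ⟨h', by cases hp; rfl⟩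

lemma walk_len2 {u v : W} (w : G.Walk u v) (h : w.length = 2) :
    ∃ (x : W) (h1 : G.Adj u x) (h2 : G.Adj x v),
      w = Walk.cons h1 (Walk.cons h2 Walk.nil) := by
  cases w with
  | nil => simp at h
  | cons h' p =>
    simp [Walk.length_cons] at h
    obtain ⟨ha, hp⟩ := walk_len1 p h
    exact ⟨_, h', ha, by rw [hp]⟩

section CBG

variable {n m : ℕ}

lemma cbg_adj_lr (i : Fin n) (j : Fin m) :
    (completeBipartiteGraph (Fin n) (Fin m)).Adj (Sum.inl i) (Sum.inr j) := by simp

lemma cbg_not_adj_ll (i i' : Fin n) :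
    ¬ (completeBipartiteGraph (Fin n) (Fin m)).Adj (Sum.inl i) (Sum.inl i') := by simp

lemma cbg_not_adj_rr (j j' : Fin m) :
    ¬ (completeBipartiteGraph (Fin n) (Fin m)).Adj (Sum.inr j) (Sum.inr j') := by simp

lemma cbg_dist_lr (i : Fin n) (j : Fin m) :
    (completeBipartiteGraph (Fin n) (Fin m)).dist (Sum.inl i) (Sum.inr j) = 1 :=
  dist_eq_one_iff_adj.mpr (cbg_adj_lr i j)

/-- walk of length 2 between two lefts -/
def wll [NeZero m] (i i' : Fin n) :
    (completeBipartiteGraph (Fin n) (Fin m)).Walk (Sum.inl i) (Sum.inl i') :=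
  Walk.cons (cbg_adj_lr i 0) (Walk.cons ((cbg_adj_lr i' 0).symm) Walk.nil)

def wrr [NeZero n] (j j' : Fin m) :
    (completeBipartiteGraph (Fin n) (Fin m)).Walk (Sum.inr j) (Sum.inr j') :=
  Walk.cons ((cbg_adj_lr 0 j).symm) (Walk.cons (cbg_adj_lr 0 j') Walk.nil)

lemma cbg_dist_ll [NeZero m] {i i' : Fin n} (hne : i ≠ i') :
    (completeBipartiteGraph (Fin n) (Fin m)).dist (Sum.inl i) (Sum.inl i') = 2 := by
  have hle := dist_le (wll i i' (m := m))
  simp only [wll, Walk.length_cons, Walk.length_nil] at hle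
  have h0 : (completeBipartiteGraph (Fin n) (Fin m)).dist (Sum.inl i) (Sum.inl i') ≠ 0 := by
    intro h0
    have := (Reachable.dist_eq_zero_iff ⟨wll i i'⟩).mp h0
    simp only [Sum.inl.injEq] at this
    exact hne this
  have h1 : (completeBipartiteGraph (Fin n) (Fin m)).dist (Sum.inl i) (Sum.inl i') ≠ 1 := by
    intro h1
    exact cbg_not_adj_ll i i' (dist_eq_one_iff_adj.mp h1)
  omega

lemma cbg_dist_rr [NeZero n] {j j' : Fin m} (hne : j ≠ j') :
    (completeBipartiteGraph (Fin n) (Fin m)).dist (Sum.inr j) (Sum.inr j') = 2 := by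
  have hle := dist_le (wrr j j' (n := n))
  simp only [wrr, Walk.length_cons, Walk.length_nil] at hle
  have h0 : (completeBipartiteGraph (Fin n) (Fin m)).dist (Sum.inr j) (Sum.inr j') ≠ 0 := by
    intro h0
    have := (Reachable.dist_eq_zero_iff ⟨wrr j j'⟩).mp h0
    simp only [Sum.inr.injEq] at this
    exact hne this
  have h1 : (completeBipartiteGraph (Fin n) (Fin m)).dist (Sum.inr j) (Sum.inr j') ≠ 1 := by
    intro h1
    exact cbg_not_adj_rr j j' (dist_eq_one_iff_adj.mp h1)
  omega


noncomputable def pairEquiv (n : ℕ) : {a : Sym2 (Fin n) // ¬a.IsDiag} ≃ Fin (n.choose 2) :=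
  Fintype.equivFinOfCardEq
    (by simpa using Sym2.card_subtype_not_diag (α := Fin n))

lemma choose2_le (hn3 : 3 ≤ n) : 3 ≤ n.choose 2 := by
  calc 3 = Nat.choose 3 2 := by decide
  _ ≤ n.choose 2 := Nat.choose_le_choose 2 hn3

noncomputable def midj (hm : n.choose 2 ≤ m) (p : {a : Sym2 (Fin n) // ¬a.IsDiag}) : Fin m :=
  ⟨(m - n.choose 2) + (pairEquiv n p), by have := (pairEquiv n p).2; omega⟩

noncomputable def gam (hn3 : 3 ≤ n) (hm : n.choose 2 ≤ m) :
    ∀ u v : Fin n ⊕ Fin m, (completeBipartiteGraph (Fin n) (Fin m)).Walk u v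
  | Sum.inl i, Sum.inl i' =>
    if h : i = i' then h ▸ Walk.nil
    else
      Walk.cons (cbg_adj_lr i (midj hm ⟨s(i,i'), by simpa using h⟩))
        (Walk.cons (cbg_adj_lr i' (midj hm ⟨s(i,i'), by simpa using h⟩)).symm Walk.nil)
  | Sum.inl i, Sum.inr j => Walk.cons (cbg_adj_lr i j) Walk.nil
  | Sum.inr j, Sum.inl i => Walk.cons (cbg_adj_lr i j).symm Walk.nil
  | Sum.inr j, Sum.inr j' =>
    if h : j = j' then h ▸ Walk.nil
    else Walk.cons (cbg_adj_lr ⟨0, by omega⟩ j).symm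
      (Walk.cons (cbg_adj_lr ⟨0, by omega⟩ j') Walk.nil)

lemma rev1 {W : Type*} {G : SimpleGraph W} {u v : W} (h : G.Adj u v) :
    (Walk.cons h Walk.nil).reverse = Walk.cons h.symm Walk.nil := rfl

lemma rev2 {W : Type*} {G : SimpleGraph W} {u x v : W} (h1 : G.Adj u x) (h2 : G.Adj x v) :
    (Walk.cons h1 (Walk.cons h2 Walk.nil)).reverse
      = Walk.cons h2.symm (Walk.cons h1.symm Walk.nil) := rfl

lemma walk2_eq {W : Type*} {G : SimpleGraph W} {u v x x' : W} (h : x = x')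
    (h1 : G.Adj u x) (h2 : G.Adj x v) (h1' : G.Adj u x') (h2' : G.Adj x' v) :
    Walk.cons h1 (Walk.cons h2 Walk.nil) = Walk.cons h1' (Walk.cons h2' Walk.nil) := by
  subst h; rfl

lemma gam_symm (hn3 : 3 ≤ n) (hm : n.choose 2 ≤ m) (u v : Fin n ⊕ Fin m) :
    gam hn3 hm u v = (gam hn3 hm v u).reverse := by
  match u, v with
  | Sum.inl i, Sum.inl i' =>
    by_cases h : i = i'
    · subst h; simp only [gam, dif_pos rfl]; rfl
    · simp only [gam, dif_neg h, dif_neg (Ne.symm h), rev2]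
      refine walk2_eq ?_ _ _ _ _
      have : (⟨s(i,i'), by simpa using h⟩ : {a : Sym2 (Fin n) // ¬a.IsDiag})
          = ⟨s(i',i), by simpa using Ne.symm h⟩ := Subtype.ext (Sym2.eq_swap)
      rw [this]
  | Sum.inl i, Sum.inr j => simp only [gam, rev1]
  | Sum.inr j, Sum.inl i => simp only [gam, rev1]
  | Sum.inr j, Sum.inr j' =>
    by_cases h : j = j'
    · subst h; simp only [gam, dif_pos rfl]; rfl
    · simp only [gam, dif_neg h, dif_neg (Ne.symm h), rev2]

end CBG

section CBG2
variable {n m : ℕ}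

lemma gam_length (hn3 : 3 ≤ n) (hm : n.choose 2 ≤ m) (u v : Fin n ⊕ Fin m) :
    (gam hn3 hm u v).length = (completeBipartiteGraph (Fin n) (Fin m)).dist u v := by
  have hm0 : 0 < m := by have := choose2_le hn3; omega
  haveI : NeZero m := ⟨by omega⟩
  haveI : NeZero n := ⟨by omega⟩
  match u, v with
  | Sum.inl i, Sum.inl i' =>
    by_cases h : i = i'
    · subst h
      simp only [gam, dif_pos rfl]
      simp [SimpleGraph.dist_self]
    · simp only [gam, dif_neg h, cbg_dist_ll h]
      simp
  | Sum.inl i, Sum.inr j => simp only [gam, cbg_dist_lr]; simp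
  | Sum.inr j, Sum.inl i =>
    have : (completeBipartiteGraph (Fin n) (Fin m)).dist (Sum.inr j) (Sum.inl i) = 1 := by
      rw [SimpleGraph.dist_comm]; exact cbg_dist_lr i j
    simp only [gam, this]; simp
  | Sum.inr j, Sum.inr j' =>
    by_cases h : j = j'
    · subst h
      simp only [gam, dif_pos rfl]
      simp [SimpleGraph.dist_self]
    · simp only [gam, dif_neg h, cbg_dist_rr h]
      rfl
end CBG2

section Upper
variable {n m : ℕ}

lemma upper (hn3 : 3 ≤ n) (hm : n.choose 2 ≤ m) :
    ∃ S : Finset (Fin n ⊕ Fin m), S.card = m + n - n.choose 2 ∧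
      IsStrongGeodeticSet (completeBipartiteGraph (Fin n) (Fin m)) ↑S := by
  classical
  have ht : m - n.choose 2 ≤ m := Nat.sub_le _ _
  set S : Finset (Fin n ⊕ Fin m) :=
    (Finset.univ.image (Sum.inl : Fin n → Fin n ⊕ Fin m)) ∪
    ((Finset.univ : Finset (Fin (m - n.choose 2))).image
      (fun k => Sum.inr (Fin.castLE ht k))) with hSdef
  have hSl : ∀ i : Fin n, Sum.inl i ∈ (↑S : Set (Fin n ⊕ Fin m)) := by
    intro i; simp [hSdef]
  have hSr : ∀ j : Fin m, (j : ℕ) < m - n.choose 2 →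
      Sum.inr j ∈ (↑S : Set (Fin n ⊕ Fin m)) := by
    intro j hj
    simp only [hSdef, Finset.coe_union, Set.mem_union, Finset.coe_image,
      Set.mem_image, Finset.mem_coe, Finset.mem_image]
    right
    exact ⟨⟨(j : ℕ), hj⟩, by simp, by apply congrArg; apply Fin.ext; simp⟩
  refine ⟨S, ?_, ?_⟩
  · rw [hSdef, Finset.card_union_of_disjoint]
    · rw [Finset.card_image_of_injective _ Sum.inl_injective,
        Finset.card_image_of_injective]
      · simp; omega
      · intro a b hab
        simp only [Sum.inr.injEq] at hab
        exact Fin.castLE_injective ht hab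
    · rw [Finset.disjoint_left]
      rintro x hx hx'
      simp only [Finset.mem_image, Finset.mem_univ, true_and] at hx hx'
      obtain ⟨i, rfl⟩ := hx
      obtain ⟨k, hk⟩ := hx'
      exact absurd hk (by simp)
  · refine ⟨fun u _ v _ => gam hn3 hm u v,
      fun u _ v _ => gam_length hn3 hm u v,
      fun u _ v _ => gam_symm hn3 hm u v, ?_⟩
    intro x
    match x with
    | Sum.inl i =>
      refine ⟨Sum.inl i, hSl i, Sum.inl i, hSl i, ?_⟩
      simp [gam]
    | Sum.inr j =>
      by_cases hj : (j : ℕ) < m - n.choose 2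
      · refine ⟨Sum.inr j, hSr j hj, Sum.inr j, hSr j hj, ?_⟩
        simp [gam]
      · have hbound : (j : ℕ) - (m - n.choose 2) < n.choose 2 := by
          have := j.2; omega
        set k : Fin (n.choose 2) := ⟨(j : ℕ) - (m - n.choose 2), hbound⟩ with hkdef
        set p := (pairEquiv n).symm k with hpdef
        have hek : pairEquiv n p = k := Equiv.apply_symm_apply _ _
        obtain ⟨⟨i, i'⟩, hq⟩ := Quot.exists_rep p.1
        have hp1 : p.1 = s(i, i') := hq.symm
        have hne : i ≠ i' := by
          have h2 := p.2; rw [hp1] at h2; simpa using h2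
        have hmid : ∀ w : ¬ (s(i,i') : Sym2 (Fin n)).IsDiag,
            midj hm ⟨s(i,i'), w⟩ = j := by
          intro w
          apply Fin.ext
          have hsub : (⟨s(i,i'), w⟩ : {a : Sym2 (Fin n) // ¬a.IsDiag}) = p :=
            Subtype.ext hp1.symm
          rw [midj]
          simp only [hsub, hek, hkdef]
          have := j.2; omega
        refine ⟨Sum.inl i, hSl i, Sum.inl i', hSl i', ?_⟩
        simp [gam, dif_neg hne, hmid]
end Upper


section SuppArith
variable {W : Type*} {G : SimpleGraph W}

lemma walk_len0' {u v : W} (w : G.Walk u v) (h : w.length = 0) :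
    ∃ (he : u = v), w = he ▸ Walk.nil := by
  cases w with
  | nil => exact ⟨rfl, rfl⟩
  | cons h' p => simp at h

lemma walk_len1' {u v : W} (w : G.Walk u v) (h : w.length = 1) :
    ∃ (ha : G.Adj u v), w = Walk.cons ha Walk.nil := by
  cases w with
  | nil => simp at h
  | cons h' p =>
    simp [Walk.length_cons] at h
    obtain ⟨he, hp⟩ := walk_len0' p (Walk.nil_iff_length_eq.mp h)
    subst he
    exact ⟨h', by cases hp; rfl⟩

lemma supp0 {u v : W} (w : G.Walk u v) (h : w.length = 0) : w.support = [u] := by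
  cases w with
  | nil => rfl
  | cons h' p => simp at h

lemma supp1 {u v : W} (w : G.Walk u v) (h : w.length = 1) : w.support = [u, v] := by
  cases w with
  | nil => simp at h
  | cons h' p =>
    simp only [Walk.length_cons, Nat.add_eq_right, Nat.succ_eq_add_one,
      Nat.add_eq_zero] at h
    have h0 : p.length = 0 := by omega
    have he := Walk.eq_of_length_eq_zero h0
    subst he
    rw [Walk.support_cons, supp0 p h0]

lemma supp2 {u v : W} (w : G.Walk u v) (h : w.length = 2) :
    ∃ x : W, G.Adj u x ∧ G.Adj x v ∧ w.support = [u, x, v] := by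
  cases w with
  | nil => simp at h
  | cons h' p =>
    have h1 : p.length = 1 := by simpa [Walk.length_cons] using h
    obtain ⟨ha, _⟩ := walk_len1' p h1
    exact ⟨_, h', ha, by rw [Walk.support_cons, supp1 p h1]⟩
end SuppArith

lemma two_mul_choose_two (k : ℕ) : 2 * k.choose 2 = k * (k - 1) := by
  induction k with
  | zero => rfl
  | succ k ih =>
    rw [Nat.choose_succ_succ, Nat.choose_one_right, Nat.mul_add, ih]
    rcases k with _ | l
    · rfl
    · simp only [Nat.succ_sub_one]
      ring

lemma key_arith (a n : ℕ) (ha : a ≤ n) (h3 : 3 ≤ n) :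
    a.choose 2 + n ≤ n.choose 2 + a := by
  have hA := two_mul_choose_two a
  have hN := two_mul_choose_two n
  suffices h : 2 * (a.choose 2 + n) ≤ 2 * (n.choose 2 + a) by omega
  rcases Nat.eq_zero_or_pos a with rfl | hap
  · have h2 : 2 ≤ n - 1 := by omega
    have h4 : n * 2 ≤ n * (n - 1) := Nat.mul_le_mul_left n h2
    simp only [Nat.choose_zero_succ]  -- maybe wrong name; fix below
    omega
  · obtain ⟨a', rfl⟩ : ∃ a', a = a' + 1 := ⟨a - 1, by omega⟩
    obtain ⟨n', rfl⟩ : ∃ n', n = n' + 1 := ⟨n - 1, by omega⟩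
    obtain ⟨d, rfl⟩ : ∃ d, n' = a' + d := ⟨n' - a', by omega⟩
    simp only [Nat.succ_sub_one] at hA hN
    have h2 : 2 ≤ a' + d := by omega
    nlinarith [hA, hN, h2]

lemma sym2_nondiag_card {α : Type*} [DecidableEq α] (s : Finset α) :
    (s.sym2.filter (fun p => ¬ p.IsDiag)).card = s.card.choose 2 := by
  classical
  have h1 : (s.sym2.filter (fun p => p.IsDiag)).card
      + (s.sym2.filter (fun p => ¬ p.IsDiag)).card = s.sym2.card :=
    Finset.card_filter_add_card_filter_not _
  have h2 : s.sym2.filter (fun p => p.IsDiag) = s.image Sym2.diag := by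
    ext p
    simp only [Finset.mem_filter, Finset.mem_image]
    constructor
    · rintro ⟨hp, hd⟩
      induction p using Sym2.ind with
      | _ x y =>
        rw [Sym2.mk_isDiag_iff] at hd
        subst hd
        exact ⟨x, (Finset.mk_mem_sym2_iff.mp hp).1, rfl⟩
    · rintro ⟨x, hx, rfl⟩
      exact ⟨Finset.mk_mem_sym2_iff.mpr ⟨hx, hx⟩, Sym2.diag_isDiag x⟩
  rw [h2, Finset.card_image_of_injective _ Sym2.diag_injective, Finset.card_sym2] at h1
  have h3 : (s.card + 1).choose 2 = s.card + s.card.choose 2 := by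
    rw [Nat.choose_succ_succ, Nat.choose_one_right]
  omega

section Lower
variable {n m : ℕ}

lemma lower (hn3 : 3 ≤ n) (hnm : n ≤ m) (hm : n.choose 2 ≤ m)
    (S : Finset (Fin n ⊕ Fin m))
    (hS : IsStrongGeodeticSet (completeBipartiteGraph (Fin n) (Fin m)) ↑S) :
    m + n - n.choose 2 ≤ S.card := by
  classical
  haveI : NeZero n := ⟨by omega⟩
  haveI : NeZero m := ⟨by omega⟩
  obtain ⟨γ, hlen, hsym, hcov⟩ := hS
  set SX : Finset (Fin n) := Finset.univ.filter (fun i => Sum.inl i ∈ S) with hSX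
  set SY : Finset (Fin m) := Finset.univ.filter (fun j => Sum.inr j ∈ S) with hSY
  set Ycomp : Finset (Fin m) := Finset.univ.filter (fun j => Sum.inr j ∉ S) with hYc
  -- S.card = SX.card + SY.card
  have hcardS : S.card = SX.card + SY.card := by
    have hun : S = SX.image Sum.inl ∪ SY.image Sum.inr := by
      ext x
      cases x with
      | inl i => simp [hSX]
      | inr j => simp [hSY]
    rw [hun, Finset.card_union_of_disjoint, Finset.card_image_of_injective _ Sum.inl_injective,
      Finset.card_image_of_injective _ Sum.inr_injective]
    rw [Finset.disjoint_left]
    rintro x hx hx'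
    simp only [Finset.mem_image] at hx hx'
    obtain ⟨i, _, rfl⟩ := hx
    obtain ⟨j, _, hj⟩ := hx'
    exact absurd hj (by simp)
  -- uniqueness of middles
  have hx : ∀ (i i' : Fin n) (hu : Sum.inl i ∈ (↑S : Set (Fin n ⊕ Fin m)))
      (hv : Sum.inl i' ∈ (↑S : Set (Fin n ⊕ Fin m))) (hne : i ≠ i'),
      ∃ x : Fin m, Sum.inr x ∈ (γ (Sum.inl i) hu (Sum.inl i') hv).support ∧
        ∀ j : Fin m, Sum.inr j ∈ (γ (Sum.inl i) hu (Sum.inl i') hv).support → j = x := by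
    intro i i' hu hv hne
    have hl := hlen _ hu _ hv
    rw [cbg_dist_ll hne] at hl
    obtain ⟨x, h1, h2, hs⟩ := supp2 _ hl
    match x, h1 with
    | Sum.inr y, h1 =>
      refine ⟨y, by rw [hs]; simp, ?_⟩
      intro j hj
      rw [hs] at hj
      simp only [List.mem_cons, List.not_mem_nil, or_false] at hj
      rcases hj with hj | hj | hj
      · exact absurd hj (by simp)
      · exact Sum.inr_injective hj
      · exact absurd hj (by simp)
  choose mid hmem0 huniq using hx
  have mid_congr : ∀ (i₁ i₁' i₂ i₂' : Fin n) (hu₁ hv₁) (hne₁ : i₁ ≠ i₁') (hu₂ hv₂)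
      (hne₂ : i₂ ≠ i₂'), i₁ = i₂ → i₁' = i₂' →
      mid i₁ i₁' hu₁ hv₁ hne₁ = mid i₂ i₂' hu₂ hv₂ hne₂ := by
    intro i₁ i₁' i₂ i₂' hu₁ hv₁ hne₁ hu₂ hv₂ hne₂ h h'
    subst h; subst h'; rfl
  have mid_swap : ∀ (i i' : Fin n) (hu hv) (hne : i ≠ i'),
      mid i' i hv hu (Ne.symm hne) = mid i i' hu hv hne := by
    intro i i' hu hv hne
    apply huniq i i' hu hv hne
    have h0 := hmem0 i' i hv hu (Ne.symm hne)
    rw [hsym _ hv _ hu, Walk.support_reverse, List.mem_reverse] at h0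
    exact h0
  -- extraction
  have hext : ∀ j : Fin m, Sum.inr j ∉ S →
      ∃ (i i' : Fin n) (hu : Sum.inl i ∈ (↑S : Set (Fin n ⊕ Fin m)))
        (hv : Sum.inl i' ∈ (↑S : Set (Fin n ⊕ Fin m))) (hne : i ≠ i'),
        j = mid i i' hu hv hne := by
    intro j hj
    obtain ⟨u, hu, v, hv, hmem⟩ := hcov (Sum.inr j)
    match u, v with
    | Sum.inl i, Sum.inl i' =>
      by_cases h : i = i'
      · subst h
        have hl := hlen _ hu _ hv
        rw [SimpleGraph.dist_self] at hl
        rw [supp0 _ hl] at hmem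
        simp at hmem
      · exact ⟨i, i', hu, hv, h, huniq i i' hu hv h j hmem⟩
    | Sum.inl i, Sum.inr j' =>
      have hl := hlen _ hu _ hv
      rw [cbg_dist_lr] at hl
      rw [supp1 _ hl] at hmem
      simp only [List.mem_cons, List.not_mem_nil, or_false] at hmem
      rcases hmem with hmem | hmem
      · exact absurd hmem (by simp)
      · rw [Sum.inr_injective hmem] at hj
        exact absurd (Finset.mem_coe.mp hv) hj
    | Sum.inr j', Sum.inl i =>
      have hl := hlen _ hu _ hv
      rw [SimpleGraph.dist_comm, cbg_dist_lr] at hl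
      rw [supp1 _ hl] at hmem
      simp only [List.mem_cons, List.not_mem_nil, or_false] at hmem
      rcases hmem with hmem | hmem
      · rw [Sum.inr_injective hmem] at hj
        exact absurd (Finset.mem_coe.mp hu) hj
      · exact absurd hmem (by simp)
    | Sum.inr j₁, Sum.inr j₂ =>
      by_cases h : j₁ = j₂
      · subst h
        have hl := hlen _ hu _ hv
        rw [SimpleGraph.dist_self] at hl
        rw [supp0 _ hl] at hmem
        simp only [List.mem_cons, List.not_mem_nil, or_false] at hmem
        rw [Sum.inr_injective hmem] at hj
        exact absurd (Finset.mem_coe.mp hu) hj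
      · have hl := hlen _ hu _ hv
        rw [cbg_dist_rr h] at hl
        obtain ⟨x, h1, h2, hs⟩ := supp2 _ hl
        match x, h1 with
        | Sum.inl z, h1 =>
          rw [hs] at hmem
          simp only [List.mem_cons, List.not_mem_nil, or_false] at hmem
          rcases hmem with hmem | hmem | hmem
          · rw [Sum.inr_injective hmem] at hj
            exact absurd (Finset.mem_coe.mp hu) hj
          · exact absurd hmem (by simp)
          · rw [Sum.inr_injective hmem] at hj
            exact absurd (Finset.mem_coe.mp hv) hj
  choose I I' pu pv pne peq using hext
  -- the injection into nondiagonal pairs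
  set T : Finset (Sym2 (Fin n)) := SX.sym2.filter (fun p => ¬ p.IsDiag) with hT
  set f : Fin m → Sym2 (Fin n) := fun j =>
    if h : Sum.inr j ∉ S then s(I j h, I' j h) else Sym2.diag ⟨0, by omega⟩ with hf
  have hmaps : ∀ j ∈ Ycomp, f j ∈ T := by
    intro j hj
    rw [hYc, Finset.mem_filter] at hj
    obtain ⟨-, h⟩ := hj
    rw [hf]
    simp only [dif_pos h]
    rw [hT, Finset.mem_filter]
    constructor
    · rw [Finset.mk_mem_sym2_iff, hSX]
      exact ⟨by simp [Finset.mem_coe.mp (pu j h)], by simp [Finset.mem_coe.mp (pv j h)]⟩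
    · simpa [Sym2.mk_isDiag_iff] using pne j h
  have hinj : Set.InjOn f ↑Ycomp := by
    intro j₁ hj₁ j₂ hj₂ hfe
    rw [Finset.mem_coe, hYc, Finset.mem_filter] at hj₁ hj₂
    obtain ⟨-, h₁⟩ := hj₁
    obtain ⟨-, h₂⟩ := hj₂
    rw [hf] at hfe
    simp only [dif_pos h₁, dif_pos h₂] at hfe
    rw [Sym2.eq_iff] at hfe
    rcases hfe with ⟨e1, e2⟩ | ⟨e1, e2⟩
    · rw [peq j₁ h₁, peq j₂ h₂]
      exact mid_congr _ _ _ _ _ _ _ _ _ _ e1 e2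
    · rw [peq j₁ h₁, peq j₂ h₂, ← mid_swap (I j₂ h₂) (I' j₂ h₂) (pu j₂ h₂) (pv j₂ h₂) (pne j₂ h₂)]
      exact mid_congr _ _ _ _ _ _ _ _ _ _ e1 e2
  have hcount : Ycomp.card ≤ SX.card.choose 2 := by
    have := Finset.card_le_card_of_injOn f hmaps hinj
    rwa [hT, sym2_nondiag_card] at this
  have hYSY : SY.card + Ycomp.card = m := by
    have := Finset.card_filter_add_card_filter_not
      (s := (Finset.univ : Finset (Fin m))) (p := fun j => Sum.inr j ∈ S)
    simpa [hSY, hYc] using this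
  have hax : SX.card ≤ n := by
    calc SX.card ≤ (Finset.univ : Finset (Fin n)).card := Finset.card_le_card (Finset.subset_univ _)
    _ = n := by simp
  have hkey := key_arith SX.card n hax hn3
  omega
end Lower

/-- Theorem 2.4, case 2: if `3 ≤ n ≤ m` and `m ≥ binom(n, 2)`, then
`sg(K_{n,m}) = m + n - binom(n, 2)`. -/
theorem sg_completeBipartite_case2 (n m : ℕ) (h3 : 3 ≤ n) (hnm : n ≤ m)
    (h : n.choose 2 ≤ m) :
    strongGeodeticNumber (completeBipartiteGraph (Fin n) (Fin m)) = m + n - n.choose 2 := by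
  apply le_antisymm
  · obtain ⟨S, hc, hs⟩ := upper h3 h
    exact Nat.sInf_le ⟨S, hc, hs⟩
  · apply le_csInf
    · obtain ⟨S, hc, hs⟩ := upper h3 h
      exact ⟨_, S, hc, hs⟩
    · rintro k ⟨S, rfl, hs⟩
      exact lower h3 hnm h S hs
end

section
/- For integers 3 ≤ n ≤ m with binom(n,2) > m and m ≥ 3 + binom(n-3,2), the strong geodetic number of the complete bipartite graph K_{n,m} equals n. -/
open SimpleGraph

open Sum Finset

variable {n m : ℕ}

lemma choose_two_succ (k : ℕ) : (k + 1).choose 2 = k.choose 2 + k := by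
  rw [Nat.choose_succ_succ', Nat.choose_one_right]
  norm_num
  omega
lemma choose_two_mono {y x : ℕ} (hy : 2 ≤ y) (hxy : y ≤ x) :
    y.choose 2 + 2 * (x - y) ≤ x.choose 2 := by
  induction x, hxy using Nat.le_induction with
  | base => simp
  | succ x hx ih =>
    have h := choose_two_succ x
    omega

lemma arith_lemma (n m a b : ℕ) (h3 : 3 ≤ n) (hnm : n ≤ m)
    (h2 : 3 + (n - 3).choose 2 ≤ m) (hA : n ≤ a + b.choose 2)
    (hB : m ≤ b + a.choose 2) : n ≤ a + b := by
  by_contra hcon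
  push_neg at hcon
  have hb4 : 4 ≤ b := by
    by_contra hb
    push_neg at hb
    interval_cases b <;> simp [Nat.choose] at hA <;> omega
  have ha5 : a + 5 ≤ n := by omega
  rcases le_or_gt a 2 with hc | hc
  · interval_cases a <;> simp [Nat.choose] at hB <;> omega
  · have hmono : (a + 2).choose 2 + 2 * ((n - 3) - (a + 2)) ≤ (n - 3).choose 2 :=
      choose_two_mono (by omega) (by omega)
    have heq : (a + 2).choose 2 = a.choose 2 + (2 * a + 1) := by
      have e1 := choose_two_succ a
      have e2 := choose_two_succ (a + 1)
      rw [show a + 1 + 1 = a + 2 from rfl] at e2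
      omega
    omega

private abbrev G (n m : ℕ) : SimpleGraph (Fin n ⊕ Fin m) := completeBipartiteGraph (Fin n) (Fin m)

lemma adj_lr (i : Fin n) (y : Fin m) : (G n m).Adj (inl i) (inr y) := by simp

/-- a walk of length two between two left vertices -/
def pathL (i j : Fin n) (y : Fin m) : (G n m).Walk (inl i) (inl j) :=
  Walk.cons (adj_lr i y) (Walk.cons (adj_lr j y).symm Walk.nil)

def pathR (y y' : Fin m) (i : Fin n) : (G n m).Walk (inr y) (inr y') :=
  Walk.cons (adj_lr i y).symm (Walk.cons (adj_lr i y') Walk.nil)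

@[simp] lemma pathL_length (i j : Fin n) (y : Fin m) : (pathL i j y).length = 2 := rfl
@[simp] lemma pathL_support (i j : Fin n) (y : Fin m) :
    (pathL i j y).support = [inl i, inr y, inl j] := rfl

lemma dist_le_two (hn : 0 < n) (hm : 0 < m) (u v : Fin n ⊕ Fin m) :
    (G n m).dist u v ≤ 2 := by
  cases u with
  | inl i =>
    cases v with
    | inl j => exact le_trans (SimpleGraph.dist_le (pathL i j ⟨0, hm⟩)) (by simp)
    | inr y => exact le_trans (SimpleGraph.dist_le (adj_lr i y).toWalk) (by simp)
  | inr y =>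
    cases v with
    | inl j => exact le_trans (SimpleGraph.dist_le ((adj_lr j y).symm.toWalk)) (by simp)
    | inr y' => exact le_trans (SimpleGraph.dist_le (pathR y y' ⟨0, hn⟩)) (by simp [pathR])

lemma dist_ll (hm : 0 < m) {i j : Fin n} (hij : i ≠ j) :
    (G n m).dist (inl i) (inl j) = 2 := by
  have hle : (G n m).dist (inl i) (inl j) ≤ 2 :=
    le_trans (SimpleGraph.dist_le (pathL i j ⟨0, hm⟩)) (by simp)
  have h1 : (G n m).dist (inl i) (inl j) ≠ 1 := by
    intro h
    have := SimpleGraph.dist_eq_one_iff_adj.mp h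
    simp at this
  have h0 : (G n m).dist (inl i) (inl j) ≠ 0 := by
    intro h
    rcases SimpleGraph.dist_eq_zero_iff_eq_or_not_reachable.mp h with h' | h'
    · exact hij (by simpa using h')
    · exact h' ⟨pathL i j ⟨0, hm⟩⟩
  omega

lemma geodesic_mid (hn : 0 < n) (hm : 0 < m) {u v x : Fin n ⊕ Fin m}
    (p : (G n m).Walk u v) (hl : p.length = (G n m).dist u v)
    (hx : x ∈ p.support) (hxu : x ≠ u) (hxv : x ≠ v) :
    u ≠ v ∧ (G n m).Adj u x ∧ (G n m).Adj x v ∧ p.support = [u, x, v] := by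
  have h2 : p.length ≤ 2 := hl ▸ dist_le_two hn hm u v
  cases p with
  | nil => simp at hx; exact absurd hx hxu
  | cons h q =>
    rename_i w
    cases q with
    | nil => simp at hx; rcases hx with h' | h' <;> [exact absurd h' hxu; exact absurd h' hxv]
    | cons h' r =>
      cases r with
      | cons h'' r' => simp [Walk.length_cons] at h2
      | nil =>
        have hxw : x = w := by
          simp at hx
          rcases hx with h' | h' | h' <;> first | exact absurd h' hxu | exact h' | exact absurd h' hxv
        subst hxw
        have hlen2 : ((Walk.cons h (Walk.cons h' Walk.nil)) :
            (G n m).Walk u v).length = 2 := by simp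
        have huv : u ≠ v := by
          intro he
          subst he
          rw [SimpleGraph.dist_self] at hl
          simp at hl
        exact ⟨huv, h, h', by simp⟩


lemma count_left (hn : 0 < n) (hm : 0 < m) (S : Finset (Fin n ⊕ Fin m))
    (hS : IsStrongGeodeticSet (G n m) ↑S) :
    n ≤ S.toLeft.card + (S.toRight.card).choose 2 := by
  classical
  obtain ⟨γ, hlen, hsym, hcov⟩ := hS
  haveI : Nonempty (Fin m) := ⟨⟨0, hm⟩⟩
  have key : ∀ i : Fin n, inl i ∉ S → ∃ y1 y2 : Fin m, y1 ≠ y2 ∧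
      ∃ (hu : (inr y1 : Fin n ⊕ Fin m) ∈ (↑S : Set (Fin n ⊕ Fin m)))
        (hv : (inr y2 : Fin n ⊕ Fin m) ∈ (↑S : Set (Fin n ⊕ Fin m))),
        (γ _ hu _ hv).support = [inr y1, inl i, inr y2] := by
    intro i hi
    obtain ⟨u, hu, v, hv, hmem⟩ := hcov (inl i)
    have hxu : (inl i : Fin n ⊕ Fin m) ≠ u := fun h => hi (by rw [h]; exact hu)
    have hxv : (inl i : Fin n ⊕ Fin m) ≠ v := fun h => hi (by rw [h]; exact hv)
    obtain ⟨huv, hadj1, hadj2, hsupp⟩ :=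
      geodesic_mid hn hm _ (hlen u hu v hv) hmem hxu hxv
    cases u with
    | inl i' => simp at hadj1
    | inr y1 =>
      cases v with
      | inl j' => simp at hadj2
      | inr y2 =>
        exact ⟨y1, y2, fun h => huv (by rw [h]), hu, hv, hsupp⟩
  choose! y1 y2 hne hu hv hsupp using key
  set L : Fin m → Fin m → List (Fin n ⊕ Fin m) := fun z1 z2 =>
    if h : (inr z1 : Fin n ⊕ Fin m) ∈ (↑S : Set (Fin n ⊕ Fin m)) ∧
        (inr z2 : Fin n ⊕ Fin m) ∈ (↑S : Set (Fin n ⊕ Fin m))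
    then (γ _ h.1 _ h.2).support else [] with hLdef
  have keyL : ∀ i : Fin n, inl i ∉ S →
      L (y1 i) (y2 i) = [inr (y1 i), inl i, inr (y2 i)] := by
    intro i hi
    rw [hLdef]
    dsimp only
    rw [dif_pos ⟨hu i hi, hv i hi⟩]
    exact hsupp i hi
  have symL : ∀ z1 z2 : Fin m, (inr z1 : Fin n ⊕ Fin m) ∈ (↑S : Set (Fin n ⊕ Fin m)) →
      (inr z2 : Fin n ⊕ Fin m) ∈ (↑S : Set (Fin n ⊕ Fin m)) →
      L z1 z2 = (L z2 z1).reverse := by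
    intro z1 z2 h1 h2
    rw [hLdef]
    dsimp only
    rw [dif_pos ⟨h1, h2⟩, dif_pos ⟨h2, h1⟩, hsym _ h1 _ h2,
      SimpleGraph.Walk.support_reverse]
  have hcard : (S.toLeftᶜ : Finset (Fin n)).card ≤ (S.toRight.offDiag.image Sym2.mk.uncurry).card := by
    apply Finset.card_le_card_of_injOn (fun i => s(y1 i, y2 i))
    · intro i hi
      rw [Finset.mem_coe, Finset.mem_compl, Finset.mem_toLeft] at hi
      exact Finset.mem_image.mpr ⟨(y1 i, y2 i),
        Finset.mem_offDiag.mpr ⟨Finset.mem_toRight.mpr (hu i hi),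
          Finset.mem_toRight.mpr (hv i hi), hne i hi⟩, rfl⟩
    · intro i hi i' hi' heq
      rw [Finset.mem_coe, Finset.mem_compl, Finset.mem_toLeft] at hi hi'
      simp only [Sym2.eq_iff] at heq
      have t1 := keyL i hi
      have t2 := keyL i' hi'
      rcases heq with ⟨e1, e2⟩ | ⟨e1, e2⟩
      · rw [← e1, ← e2] at t2
        have := t1.symm.trans t2
        simpa using this
      · rw [symL _ _ (hu i' hi') (hv i' hi'), ← e1, ← e2, t1] at t2
        simpa using t2
  rw [Finset.card_compl, Fintype.card_fin, Sym2.card_image_offDiag] at hcard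
  have hle : S.toLeft.card ≤ n := by
    simpa using Finset.card_le_univ S.toLeft
  omega

lemma count_right (hn : 0 < n) (hm : 0 < m) (S : Finset (Fin n ⊕ Fin m))
    (hS : IsStrongGeodeticSet (G n m) ↑S) :
    m ≤ S.toRight.card + (S.toLeft.card).choose 2 := by
  classical
  obtain ⟨γ, hlen, hsym, hcov⟩ := hS
  haveI : Nonempty (Fin n) := ⟨⟨0, hn⟩⟩
  have key : ∀ y : Fin m, inr y ∉ S → ∃ x1 x2 : Fin n, x1 ≠ x2 ∧
      ∃ (hu : (inl x1 : Fin n ⊕ Fin m) ∈ (↑S : Set (Fin n ⊕ Fin m)))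
        (hv : (inl x2 : Fin n ⊕ Fin m) ∈ (↑S : Set (Fin n ⊕ Fin m))),
        (γ _ hu _ hv).support = [inl x1, inr y, inl x2] := by
    intro y hy
    obtain ⟨u, hu, v, hv, hmem⟩ := hcov (inr y)
    have hxu : (inr y : Fin n ⊕ Fin m) ≠ u := fun h => hy (by rw [h]; exact hu)
    have hxv : (inr y : Fin n ⊕ Fin m) ≠ v := fun h => hy (by rw [h]; exact hv)
    obtain ⟨huv, hadj1, hadj2, hsupp⟩ :=
      geodesic_mid hn hm _ (hlen u hu v hv) hmem hxu hxv
    cases u with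
    | inr y' => simp at hadj1
    | inl x1 =>
      cases v with
      | inr y'' => simp at hadj2
      | inl x2 =>
        exact ⟨x1, x2, fun h => huv (by rw [h]), hu, hv, hsupp⟩
  choose! x1 x2 hne hu hv hsupp using key
  set L : Fin n → Fin n → List (Fin n ⊕ Fin m) := fun z1 z2 =>
    if h : (inl z1 : Fin n ⊕ Fin m) ∈ (↑S : Set (Fin n ⊕ Fin m)) ∧
        (inl z2 : Fin n ⊕ Fin m) ∈ (↑S : Set (Fin n ⊕ Fin m))
    then (γ _ h.1 _ h.2).support else [] with hLdef
  have keyL : ∀ y : Fin m, inr y ∉ S →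
      L (x1 y) (x2 y) = [inl (x1 y), inr y, inl (x2 y)] := by
    intro y hy
    rw [hLdef]
    dsimp only
    rw [dif_pos ⟨hu y hy, hv y hy⟩]
    exact hsupp y hy
  have symL : ∀ z1 z2 : Fin n, (inl z1 : Fin n ⊕ Fin m) ∈ (↑S : Set (Fin n ⊕ Fin m)) →
      (inl z2 : Fin n ⊕ Fin m) ∈ (↑S : Set (Fin n ⊕ Fin m)) →
      L z1 z2 = (L z2 z1).reverse := by
    intro z1 z2 h1 h2
    rw [hLdef]
    dsimp only
    rw [dif_pos ⟨h1, h2⟩, dif_pos ⟨h2, h1⟩, hsym _ h1 _ h2,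
      SimpleGraph.Walk.support_reverse]
  have hcard : (S.toRightᶜ : Finset (Fin m)).card ≤ (S.toLeft.offDiag.image Sym2.mk.uncurry).card := by
    apply Finset.card_le_card_of_injOn (fun y => s(x1 y, x2 y))
    · intro y hy
      rw [Finset.mem_coe, Finset.mem_compl, Finset.mem_toRight] at hy
      exact Finset.mem_image.mpr ⟨(x1 y, x2 y),
        Finset.mem_offDiag.mpr ⟨Finset.mem_toLeft.mpr (hu y hy),
          Finset.mem_toLeft.mpr (hv y hy), hne y hy⟩, rfl⟩
    · intro y hy y' hy' heq
      rw [Finset.mem_coe, Finset.mem_compl, Finset.mem_toRight] at hy hy'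
      simp only [Sym2.eq_iff] at heq
      have t1 := keyL y hy
      have t2 := keyL y' hy'
      rcases heq with ⟨e1, e2⟩ | ⟨e1, e2⟩
      · rw [← e1, ← e2] at t2
        have := t1.symm.trans t2
        simpa using this
      · rw [symL _ _ (hu y' hy') (hv y' hy'), ← e1, ← e2, t1] at t2
        simpa using t2
  rw [Finset.card_compl, Fintype.card_fin, Sym2.card_image_offDiag] at hcard
  have hle : S.toRight.card ≤ m := by
    simpa using Finset.card_le_univ S.toRight
  omega

lemma exists_sgs (hn : 0 < n) (hm : 0 < m) (hmn : m ≤ n.choose 2) :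
    ∃ S : Finset (Fin n ⊕ Fin m), S.card = n ∧ IsStrongGeodeticSet (G n m) ↑S := by
  classical
  obtain ⟨e⟩ : Nonempty (Fin m ↪ {p : Sym2 (Fin n) // ¬ p.IsDiag}) := by
    apply Function.Embedding.nonempty_of_card_le
    rw [Sym2.card_subtype_not_diag]
    simpa using hmn
  set g : Sym2 (Fin n) → Fin m := fun p =>
    if h : ∃ k, (e k : Sym2 (Fin n)) = p then h.choose else ⟨0, hm⟩ with hg
  have hge : ∀ k, g (e k) = k := by
    intro k
    have h : ∃ k', (e k' : Sym2 (Fin n)) = e k := ⟨k, rfl⟩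
    rw [hg]
    dsimp only
    rw [dif_pos h]
    exact e.injective (Subtype.coe_injective h.choose_spec)
  set W : ∀ i j : Fin n, (G n m).Walk (inl i) (inl j) := fun i j =>
    if h : i = j then h ▸ Walk.nil else pathL i j (g s(i, j)) with hW
  have hWd : ∀ i, W i i = Walk.nil := fun i => dif_pos rfl
  have hWl : ∀ i j, i ≠ j → W i j = pathL i j (g s(i, j)) := fun i j h => dif_neg h
  set S : Finset (Fin n ⊕ Fin m) :=
    (univ : Finset (Fin n)).map ⟨inl, Sum.inl_injective⟩ with hSdef
  have hmemS : ∀ u : Fin n ⊕ Fin m, u ∈ (↑S : Set (Fin n ⊕ Fin m)) ↔ ∃ i, u = inl i := by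
    intro u; simp [hSdef, eq_comm]
  set γ' : ∀ u v : Fin n ⊕ Fin m, (G n m).Walk u v := fun u v =>
    match u, v with
    | inl i, inl j => W i j
    | inl i, inr y => (adj_lr i y).toWalk
    | inr y, inl i => ((adj_lr i y).symm).toWalk
    | inr y, inr y' => if h : y = y' then h ▸ Walk.nil else pathR y y' ⟨0, hn⟩
    with hγ'
  refine ⟨S, by simp [hSdef], fun u _ v _ => γ' u v, ?_, ?_, ?_⟩
  · intro u hu v hv
    obtain ⟨i, rfl⟩ := (hmemS u).mp hu
    obtain ⟨j, rfl⟩ := (hmemS v).mp hv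
    show (W i j).length = (G n m).dist (inl i) (inl j)
    rcases eq_or_ne i j with rfl | hij
    · rw [hWd i, SimpleGraph.dist_self]
      simp
    · rw [hWl i j hij, dist_ll hm hij]
      simp
  · intro u hu v hv
    obtain ⟨i, rfl⟩ := (hmemS u).mp hu
    obtain ⟨j, rfl⟩ := (hmemS v).mp hv
    show W i j = (W j i).reverse
    rcases eq_or_ne i j with rfl | hij
    · rw [hWd i]
      simp
    · rw [hWl i j hij, hWl j i hij.symm]
      rw [show s(j, i) = s(i, j) from Sym2.eq_swap]
      rfl
  · intro x
    cases x with
    | inl i =>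
      exact ⟨inl i, (hmemS _).mpr ⟨i, rfl⟩, inl i, (hmemS _).mpr ⟨i, rfl⟩,
        Walk.start_mem_support _⟩
    | inr y =>
      obtain ⟨⟨i, j⟩, hij⟩ := Quot.exists_rep ((e y) : Sym2 (Fin n))
      have hij' : s(i, j) = ((e y) : Sym2 (Fin n)) := hij
      have hne : i ≠ j := by
        intro h
        apply (e y).2
        rw [← hij', h]
        exact Sym2.mk_isDiag_iff.mpr rfl
      refine ⟨inl i, (hmemS _).mpr ⟨i, rfl⟩, inl j, (hmemS _).mpr ⟨j, rfl⟩, ?_⟩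
      show inr y ∈ (W i j).support
      have hgy : g s(i, j) = y := by rw [hij', hge]
      rw [hWl i j hne, pathL_support, hgy]
      simp


/-- Theorem 2.4, case 3: if `3 ≤ n ≤ m`, `binom(n,2) > m` and `m ≥ 3 + binom(n-3, 2)`,
then `sg(K_{n,m}) = n`. -/
theorem sg_completeBipartite_case3 (n m : ℕ) (h3 : 3 ≤ n) (hnm : n ≤ m)
    (h1 : m < n.choose 2) (h2 : 3 + (n - 3).choose 2 ≤ m) :
    strongGeodeticNumber (completeBipartiteGraph (Fin n) (Fin m)) = n := by
  have hn : 0 < n := by omega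
  have hm : 0 < m := by omega
  obtain ⟨S₀, hS₀card, hS₀⟩ := exists_sgs hn hm h1.le
  have hmem : n ∈ {k | ∃ S : Finset (Fin n ⊕ Fin m), S.card = k ∧
      IsStrongGeodeticSet (completeBipartiteGraph (Fin n) (Fin m)) ↑S} :=
    ⟨S₀, hS₀card, hS₀⟩
  rw [strongGeodeticNumber]
  apply le_antisymm
  · exact Nat.sInf_le hmem
  · apply le_csInf ⟨n, hmem⟩
    rintro k ⟨S, rfl, hS⟩
    have hA := count_left hn hm S hS
    have hB := count_right hn hm S hS
    have hab := arith_lemma n m _ _ h3 hnm h2 hA hB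
    have hsum := Finset.card_toLeft_add_card_toRight (u := S)
    omega
end
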